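/- Let f : [1,∞) → (0,∞) be differentiable with |d/dx ln(f(e^x))| ≤ C for some finite C, and let d̄(f) = limsup_{x→∞} ln(f(x))/ln(x). If d̄(f) > 0, then the set {t > 0 : for all α > 0, lim_{n→∞} |f(n^t) − f((n−1)^t)| / n^α = 0} equals the interval (0, d̄(f)^{-1}]. If d̄(f) = 0, this set equals (0,∞). -/

import Mathlib

open Filter Real

noncomputable section

namespace Stmt7Aux

variable {f : ℝ → ℝ} {C : ℝ}

section

variable (hpos : ∀ x, 1 ≤ x → 0 < f x)
  (hdiff : ∀ x, 1 ≤ x → DifferentiableAt ℝ f x)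
  (hlip : ∀ x : ℝ, 0 ≤ x → |deriv (fun t => Real.log (f (Real.exp t))) x| ≤ C)

include hpos hdiff hlip in
lemma lipKey {x y : ℝ} (hx : 1 ≤ x) (hxy : x ≤ y) :
    |Real.log (f y) - Real.log (f x)| ≤ C * (Real.log y - Real.log x) := by
  have hy : (1:ℝ) ≤ y := hx.trans hxy
  have hx0 : (0:ℝ) < x := lt_of_lt_of_le one_pos hx
  have hy0 : (0:ℝ) < y := lt_of_lt_of_le one_pos hy
  have hgd : ∀ t ∈ Set.Ici (0:ℝ), DifferentiableAt ℝ (fun s => Real.log (f (Real.exp s))) t := by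
    intro t ht
    have h1 : (1:ℝ) ≤ Real.exp t := Real.one_le_exp ht
    have h2 : DifferentiableAt ℝ (fun s => f (Real.exp s)) t :=
      (hdiff _ h1).comp t Real.differentiable_exp.differentiableAt
    exact (Real.differentiableAt_log (hpos _ h1).ne').comp t h2
  have hb : ∀ t ∈ Set.Ici (0:ℝ), ‖deriv (fun s => Real.log (f (Real.exp s))) t‖ ≤ C := by
    intro t ht; rw [Real.norm_eq_abs]; exact hlip t ht
  have key := Convex.norm_image_sub_le_of_norm_deriv_le hgd hb (convex_Ici 0)
      (Set.mem_Ici.2 (Real.log_nonneg hx)) (Set.mem_Ici.2 (Real.log_nonneg hy))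
  simp only [Real.exp_log hx0, Real.exp_log hy0, Real.norm_eq_abs] at key
  rwa [abs_of_nonneg (sub_nonneg.2 (Real.log_le_log hx0 hxy))] at key

include hpos hdiff hlip in
lemma derivBound (x : ℝ) (hx : 1 ≤ x) : |deriv f x| * x ≤ C * f x := by
  have hx0 : (0:ℝ) < x := lt_of_lt_of_le one_pos hx
  have hfx := hpos x hx
  have h2 : HasDerivAt Real.exp x (Real.log x) := by
    simpa [Real.exp_log hx0] using Real.hasDerivAt_exp (Real.log x)
  have h1 : HasDerivAt f (deriv f x) (Real.exp (Real.log x)) := by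
    rw [Real.exp_log hx0]; exact (hdiff x hx).hasDerivAt
  have h3 : HasDerivAt (fun s => f (Real.exp s)) (deriv f x * x) (Real.log x) := h1.comp _ h2
  have h4 : HasDerivAt (fun s => Real.log (f (Real.exp s))) ((deriv f x * x) / f x)
      (Real.log x) := by
    have := h3.log (by simpa [Real.exp_log hx0] using hfx.ne')
    rwa [Real.exp_log hx0] at this
  have h5 := hlip (Real.log x) (Real.log_nonneg hx)
  rw [h4.deriv, abs_div, abs_mul, abs_of_pos hfx, abs_of_pos hx0,
    div_le_iff₀ hfx] at h5
  linarith [h5]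

include hpos hdiff hlip in
lemma ratioBound :
    ∀ᶠ x : ℝ in atTop, |Real.log (f x) / Real.log x| ≤ |Real.log (f 1)| + C := by
  have hC : 0 ≤ C := le_trans (abs_nonneg _) (hlip 0 le_rfl)
  filter_upwards [eventually_ge_atTop (Real.exp 1)] with x hx
  have hx1 : (1:ℝ) ≤ x := le_trans (Real.one_le_exp zero_le_one) hx
  have hlx : (1:ℝ) ≤ Real.log x := by
    have := Real.log_le_log (Real.exp_pos 1) hx
    rwa [Real.log_exp] at this
  have key := lipKey hpos hdiff hlip (le_refl (1:ℝ)) hx1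
  rw [Real.log_one, sub_zero] at key
  have htri : |Real.log (f x)| ≤ |Real.log (f 1)| + C * Real.log x := by
    calc |Real.log (f x)| ≤ |Real.log (f x) - Real.log (f 1)| + |Real.log (f 1)| := by
          simpa using abs_add_le (Real.log (f x) - Real.log (f 1)) (Real.log (f 1))
      _ ≤ |Real.log (f 1)| + C * Real.log x := by linarith
  rw [abs_div, abs_of_pos (by linarith : (0:ℝ) < Real.log x), div_le_iff₀ (by linarith)]
  nlinarith [abs_nonneg (Real.log (f 1))]

include hpos hdiff hlip in
lemma growth (d : ℝ)
    (hd : d = limsup (fun x : ℝ => Real.log (f x) / Real.log x) atTop)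
    {ε : ℝ} (hε : 0 < ε) : ∀ᶠ x : ℝ in atTop, f x ≤ x ^ (d + ε) := by
  have hb := ratioBound hpos hdiff hlip
  have hbdd : IsBoundedUnder (· ≤ ·) atTop (fun x : ℝ => Real.log (f x) / Real.log x) :=
    ⟨|Real.log (f 1)| + C, eventually_map.2 <| by
      filter_upwards [hb] with x hx using (abs_le.1 hx).2⟩
  have hlt : limsup (fun x : ℝ => Real.log (f x) / Real.log x) atTop < d + ε := by
    rw [← hd]; linarith
  filter_upwards [eventually_lt_of_limsup_lt hlt hbdd, eventually_ge_atTop (Real.exp 1)]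
    with x h1 h2
  have hx1 : (1:ℝ) ≤ x := le_trans (Real.one_le_exp zero_le_one) h2
  have hlx : (0:ℝ) < Real.log x := by
    have := Real.log_le_log (Real.exp_pos 1) h2
    rw [Real.log_exp] at this; linarith
  have hkey : Real.log (f x) < (d + ε) * Real.log x := (div_lt_iff₀ hlx).1 h1
  calc f x = Real.exp (Real.log (f x)) := (Real.exp_log (hpos x hx1)).symm
    _ ≤ Real.exp ((d + ε) * Real.log x) := Real.exp_le_exp.2 hkey.le
    _ = x ^ (d + ε) := by rw [Real.rpow_def_of_pos (by linarith), mul_comm]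

include hpos hdiff hlip in
lemma mem_of (d : ℝ)
    (hd : d = limsup (fun x : ℝ => Real.log (f x) / Real.log x) atTop)
    {t : ℝ} (ht : 0 < t) (htd : t * d ≤ 1) {α : ℝ} (hα : 0 < α) :
    Tendsto (fun n : ℕ => |f ((n : ℝ) ^ t) - f (((n : ℝ) - 1) ^ t)| / (n : ℝ) ^ α)
      atTop (nhds 0) := by
  have hC : 0 ≤ C := le_trans (abs_nonneg _) (hlip 0 le_rfl)
  set ε : ℝ := α / (2 * t) with hεdef
  have hε : 0 < ε := by positivity
  have htε : t * ε = α / 2 := by rw [hεdef]; field_simp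
  obtain ⟨X, hX⟩ := eventually_atTop.1 (growth hpos hdiff hlip d hd hε)
  set E : ℝ := Real.exp (C * (t * Real.log 2)) with hE
  have hE0 : 0 < E := Real.exp_pos _
  set K : ℝ := C * E * (2:ℝ) ^ t * (2 * t) with hK
  have hK0 : 0 ≤ K := by positivity
  have hNt : Tendsto (fun n : ℕ => ((n:ℝ)) ^ t) atTop atTop :=
    (tendsto_rpow_atTop ht).comp tendsto_natCast_atTop_atTop
  have key : ∀ᶠ n : ℕ in atTop,
      |f ((n:ℝ)^t) - f (((n:ℝ)-1)^t)| / (n:ℝ)^α ≤ K * (n:ℝ)^(-(α/2)) := by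
    filter_upwards [eventually_ge_atTop 2, hNt.eventually_ge_atTop X] with n hn2 hnX
    have hN2 : (2:ℝ) ≤ (n:ℝ) := by exact_mod_cast hn2
    set N : ℝ := (n:ℝ) with hNdef
    have hN0 : (0:ℝ) < N := by linarith
    have hN1 : (1:ℝ) ≤ N - 1 := by linarith
    have ha1 : 1 ≤ (N-1) ^ t := Real.one_le_rpow hN1 ht.le
    have hab : (N-1) ^ t < N ^ t := Real.rpow_lt_rpow (by linarith) (by linarith) ht
    have hb1 : 1 ≤ N ^ t := le_trans ha1 hab.le
    have hfb : 0 < f (N ^ t) := hpos _ hb1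
    have hcont : ContinuousOn f (Set.Icc ((N-1)^t) (N^t)) := fun x hx =>
      ((hdiff x (le_trans ha1 hx.1)).continuousAt).continuousWithinAt
    have hdiffOn : DifferentiableOn ℝ f (Set.Ioo ((N-1)^t) (N^t)) := fun x hx =>
      (hdiff x (le_trans ha1 hx.1.le)).differentiableWithinAt
    obtain ⟨ξ, hξ, hderiv⟩ := exists_deriv_eq_slope f hab hcont hdiffOn
    have hξ1 : 1 ≤ ξ := le_trans ha1 hξ.1.le
    have hξ0 : 0 < ξ := lt_of_lt_of_le one_pos hξ1
    have hdiffeq : |f (N^t) - f ((N-1)^t)| = |deriv f ξ| * (N^t - (N-1)^t) := by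
      rw [hderiv, abs_div, abs_of_pos (by linarith : (0:ℝ) < N^t - (N-1)^t),
        div_mul_cancel₀ _ (ne_of_gt (by linarith : (0:ℝ) < N^t - (N-1)^t))]
    have hdb : |deriv f ξ| ≤ C * f ξ / ξ :=
      (le_div_iff₀ hξ0).2 (derivBound hpos hdiff hlip ξ hξ1)
    -- f ξ ≤ f (N^t) * E
    have hfξb : f ξ ≤ f (N^t) * E := by
      have h1 := lipKey hpos hdiff hlip hξ1 hξ.2.le
      have hlog2 : Real.log (N^t) - Real.log ξ ≤ t * Real.log 2 := by
        have hlogb : Real.log (N^t) = t * Real.log N := Real.log_rpow hN0 t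
        have hlogξ : Real.log ((N-1)^t) ≤ Real.log ξ := Real.log_le_log (by positivity) hξ.1.le
        have hloga : Real.log ((N-1)^t) = t * Real.log (N-1) := Real.log_rpow (by linarith) t
        have hq : Real.log N - Real.log (N-1) ≤ Real.log 2 := by
          rw [← Real.log_div (by linarith) (by linarith)]
          apply Real.log_le_log (by positivity)
          rw [div_le_iff₀ (by linarith)]; linarith
        have := mul_le_mul_of_nonneg_left hq ht.le
        linarith
      have h3 : Real.log (f ξ) ≤ Real.log (f (N^t)) + C * (t * Real.log 2) := by
        have h4 := (abs_le.1 h1).1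
        have h5 := mul_le_mul_of_nonneg_left hlog2 hC
        linarith [h4, h5]
      calc f ξ = Real.exp (Real.log (f ξ)) := (Real.exp_log (hpos ξ hξ1)).symm
        _ ≤ Real.exp (Real.log (f (N^t)) + C * (t * Real.log 2)) := Real.exp_le_exp.2 h3
        _ = f (N^t) * E := by rw [Real.exp_add, Real.exp_log hfb]
    -- N^t - (N-1)^t ≤ 2 t N^(t-1)
    have hba : N^t - (N-1)^t ≤ 2 * t * N ^ (t-1) := by
      have hcont2 : ContinuousOn (fun x : ℝ => x ^ t) (Set.Icc (N-1) N) := fun x hx =>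
        (Real.continuousAt_rpow_const x t
          (Or.inl (by intro h; rw [h] at hx; exact absurd hx.1 (by linarith)))).continuousWithinAt
      have hdiff2 : DifferentiableOn ℝ (fun x : ℝ => x ^ t) (Set.Ioo (N-1) N) := fun x hx =>
        (Real.differentiableAt_rpow_const_of_ne t
          (by intro h; rw [h] at hx; exact absurd hx.1 (by linarith))).differentiableWithinAt
      obtain ⟨η, hη, hd2⟩ :=
        exists_deriv_eq_slope (fun x : ℝ => x ^ t) (by linarith : N - 1 < N) hcont2 hdiff2
      have hη0 : 0 < η := by have := hη.1; linarith
      rw [Real.deriv_rpow_const η t,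
        show N - (N-1) = 1 by ring, div_one] at hd2
      have hηbound : η ^ (t-1) ≤ 2 * N ^ (t-1) := by
        rcases le_total 1 t with h | h
        · have h1 : η ^ (t-1) ≤ N ^ (t-1) := Real.rpow_le_rpow hη0.le hη.2.le (by linarith)
          have h2 : (0:ℝ) ≤ N ^ (t-1) := Real.rpow_nonneg hN0.le _
          linarith
        · have h2η : N / 2 ≤ η := by have := hη.1; linarith
          have h1 : η ^ (t-1) ≤ (N/2) ^ (t-1) :=
            Real.rpow_le_rpow_of_nonpos (by positivity) h2η (by linarith)
          have h2 : (N/2) ^ (t-1) = N ^ (t-1) / 2 ^ (t-1) :=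
            Real.div_rpow hN0.le (by norm_num) _
          have h3 : (2:ℝ) ^ (-(1:ℝ)) ≤ (2:ℝ) ^ (t-1) :=
            Real.rpow_le_rpow_of_exponent_le one_le_two (by linarith)
          have h4 : N ^ (t-1) / (2:ℝ) ^ (t-1) ≤ N ^ (t-1) / (2:ℝ) ^ (-(1:ℝ)) :=
            div_le_div_of_nonneg_left (Real.rpow_nonneg hN0.le _)
              (Real.rpow_pos_of_pos two_pos _) h3
          have h5 : N ^ (t-1) / (2:ℝ) ^ (-(1:ℝ)) = 2 * N ^ (t-1) := by
            rw [Real.rpow_neg_one]; ring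
          linarith
      have := mul_le_mul_of_nonneg_left hηbound ht.le
      linarith [hd2 ▸ this]
    -- ((N-1)^t)⁻¹ ≤ 2^t * N^(-t)
    have hainv : ((N-1)^t)⁻¹ ≤ (2:ℝ) ^ t * N ^ (-t) := by
      have h1 : (N/2) ^ t ≤ (N-1) ^ t := Real.rpow_le_rpow (by positivity) (by linarith) ht.le
      have h2 : ((N-1)^t)⁻¹ ≤ ((N/2) ^ t)⁻¹ :=
        inv_anti₀ (Real.rpow_pos_of_pos (by positivity) t) h1
      have h3 : ((N/2) ^ t)⁻¹ = (2:ℝ) ^ t * N ^ (-t) := by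
        rw [Real.div_rpow hN0.le (by norm_num), inv_div, Real.rpow_neg hN0.le,
          div_eq_mul_inv]
      rw [h3] at h2; exact h2
    have hfbX : f (N^t) ≤ N ^ (t * (d + ε)) := by
      calc f (N^t) ≤ (N^t) ^ (d+ε) := hX _ hnX
        _ = N ^ (t * (d+ε)) := (Real.rpow_mul hN0.le _ _).symm
    have hfξ0 : 0 ≤ f ξ := (hpos ξ hξ1).le
    have hmain : |f (N^t) - f ((N-1)^t)| ≤ K * N ^ (t*(d+ε) - 1) := by
      have step1 : |f (N^t) - f ((N-1)^t)| ≤ (C * f ξ / ξ) * (2*t*N^(t-1)) := by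
        rw [hdiffeq]
        apply mul_le_mul hdb hba (by linarith) (by positivity)
      have step2 : (C * f ξ / ξ) * (2*t*N^(t-1)) ≤
          (C * (f (N^t) * E) / ((N-1)^t)) * (2*t*N^(t-1)) := by
        apply mul_le_mul_of_nonneg_right _ (by positivity)
        apply div_le_div₀ (by positivity)
          (mul_le_mul_of_nonneg_left hfξb hC) (lt_of_lt_of_le one_pos ha1) hξ.1.le
      have step3 : (C * (f (N^t) * E) / ((N-1)^t)) * (2*t*N^(t-1)) =
          (C * E * f (N^t)) * ((N-1)^t)⁻¹ * (2*t*N^(t-1)) := by ring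
      have step4 : (C * E * f (N^t)) * ((N-1)^t)⁻¹ * (2*t*N^(t-1)) ≤
          (C * E * f (N^t)) * ((2:ℝ)^t * N^(-t)) * (2*t*N^(t-1)) := by
        apply mul_le_mul_of_nonneg_right _ (by positivity)
        exact mul_le_mul_of_nonneg_left hainv
          (mul_nonneg (mul_nonneg hC hE0.le) hfb.le)
      have step5 : (C * E * f (N^t)) * ((2:ℝ)^t * N^(-t)) * (2*t*N^(t-1)) ≤
          (C * E * N ^ (t*(d+ε))) * ((2:ℝ)^t * N^(-t)) * (2*t*N^(t-1)) := by
        apply mul_le_mul_of_nonneg_right _ (by positivity)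
        apply mul_le_mul_of_nonneg_right _ (by positivity)
        exact mul_le_mul_of_nonneg_left hfbX (mul_nonneg hC hE0.le)
      have step6 : (C * E * N ^ (t*(d+ε))) * ((2:ℝ)^t * N^(-t)) * (2*t*N^(t-1)) =
          K * (N ^ (t*(d+ε)) * (N^(-t) * N^(t-1))) := by rw [hK]; ring
      have step7 : N ^ (t*(d+ε)) * (N^(-t) * N^(t-1)) = N ^ (t*(d+ε) - 1) := by
        rw [← Real.rpow_add hN0, ← Real.rpow_add hN0]; ring_nf
      calc |f (N^t) - f ((N-1)^t)| ≤ (C * f ξ / ξ) * (2*t*N^(t-1)) := step1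
        _ ≤ (C * (f (N^t) * E) / ((N-1)^t)) * (2*t*N^(t-1)) := step2
        _ ≤ (C * E * N ^ (t*(d+ε))) * ((2:ℝ)^t * N^(-t)) * (2*t*N^(t-1)) := by
            rw [step3]; exact le_trans step4 step5
        _ = K * N ^ (t*(d+ε) - 1) := by rw [step6, step7]
    have hNα : 0 < N ^ α := Real.rpow_pos_of_pos hN0 α
    rw [div_le_iff₀ hNα]
    have hexp : t*(d+ε) - 1 ≤ α/2 := by
      have : t*(d+ε) = t*d + α/2 := by rw [mul_add, htε]
      linarith
    have hre : K * N ^ (-(α/2)) * N ^ α = K * N ^ (-(α/2) + α) := by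
      rw [mul_assoc, ← Real.rpow_add hN0]
    rw [hre]
    refine le_trans hmain (mul_le_mul_of_nonneg_left ?_ hK0)
    exact Real.rpow_le_rpow_of_exponent_le (by linarith) (by linarith)
  have hlim : Tendsto (fun n : ℕ => K * (n:ℝ) ^ (-(α/2))) atTop (nhds 0) := by
    have h1 : Tendsto (fun n : ℕ => ((n:ℝ)) ^ (-(α/2))) atTop (nhds 0) :=
      (tendsto_rpow_neg_atTop (by positivity : (0:ℝ) < α/2)).comp tendsto_natCast_atTop_atTop
    simpa using h1.const_mul K
  refine squeeze_zero' (Eventually.of_forall fun n => ?_) key hlim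
  exact div_nonneg (abs_nonneg _) (Real.rpow_nonneg (Nat.cast_nonneg n) _)

include hpos hdiff hlip in
lemma d_le (d : ℝ)
    (hd : d = limsup (fun x : ℝ => Real.log (f x) / Real.log x) atTop)
    {t : ℝ} (ht : 0 < t)
    (hmem : ∀ α : ℝ, 0 < α →
      Tendsto (fun n : ℕ => |f ((n : ℝ) ^ t) - f (((n : ℝ) - 1) ^ t)| / (n : ℝ) ^ α)
        atTop (nhds 0)) :
    d ≤ 1/t := by
  have hC : 0 ≤ C := le_trans (abs_nonneg _) (hlip 0 le_rfl)
  refine le_of_forall_pos_le_add fun ε hε => ?_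
  set α : ℝ := t * ε / 2 with hαdef
  have hα : 0 < α := by positivity
  have h1 := hmem α hα
  have h2 : ∀ᶠ n : ℕ in atTop, |f ((n:ℝ)^t) - f (((n:ℝ)-1)^t)| ≤ (n:ℝ)^α := by
    filter_upwards [h1.eventually_lt_const one_pos, eventually_ge_atTop 1] with n hn h1n
    have hn0 : (0:ℝ) < (n:ℝ) := by exact_mod_cast h1n
    have := (div_lt_one (Real.rpow_pos_of_pos hn0 α)).1 hn
    linarith
  obtain ⟨N0, hN0⟩ := eventually_atTop.1 h2
  set M : ℕ := max N0 1 with hMdef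
  have hM1 : 1 ≤ M := le_max_right _ _
  have hM1' : (1:ℝ) ≤ (M:ℝ) := by exact_mod_cast hM1
  have hMprop : ∀ n, M ≤ n → |f ((n:ℝ)^t) - f (((n:ℝ)-1)^t)| ≤ (n:ℝ)^α :=
    fun n hn => hN0 n (le_trans (le_max_left _ _) hn)
  set A : ℝ := f ((M:ℝ)^t) with hAdef
  have hA0 : 0 < A := hpos _ (Real.one_le_rpow hM1' ht.le)
  have tele : ∀ k : ℕ, f (((M+k:ℕ):ℝ)^t) ≤ A + (k:ℝ) * ((M+k:ℕ):ℝ)^α := by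
    intro k
    induction k with
    | zero => simp [hAdef]
    | succ k ih =>
      have hstep := hMprop (M+k+1) (by omega)
      have hx1 : ((M+k+1:ℕ):ℝ) = ((M+k:ℕ):ℝ) + 1 := by push_cast; ring
      rw [hx1, show ((M+k:ℕ):ℝ) + 1 - 1 = ((M+k:ℕ):ℝ) by ring] at hstep
      have hk1 : ((k+1:ℕ):ℝ) = (k:ℝ) + 1 := by push_cast; ring
      have hgoaleq : (M+(k+1):ℕ) = (M+k)+1 := by omega
      rw [hgoaleq, hx1, hk1]
      have h3 : f ((((M+k:ℕ):ℝ)+1)^t) ≤ f (((M+k:ℕ):ℝ)^t) + (((M+k:ℕ):ℝ)+1)^α := by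
        have := le_abs_self (f ((((M+k:ℕ):ℝ)+1)^t) - f (((M+k:ℕ):ℝ)^t))
        linarith
      have hmono : ((M+k:ℕ):ℝ)^α ≤ (((M+k:ℕ):ℝ)+1)^α :=
        Real.rpow_le_rpow (by positivity) (by linarith) hα.le
      have hprod := mul_le_mul_of_nonneg_left hmono (Nat.cast_nonneg k : (0:ℝ) ≤ (k:ℝ))
      linarith [ih]
  have hbound : ∀ n : ℕ, M ≤ n → f ((n:ℝ)^t) ≤ A + (n:ℝ)^(α+1) := by
    intro n hn
    obtain ⟨k, rfl⟩ := Nat.exists_eq_add_of_le hn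
    have h := tele k
    have hMk1 : (1:ℝ) ≤ ((M+k:ℕ):ℝ) := by
      have : (1:ℕ) ≤ M + k := le_trans hM1 (Nat.le_add_right _ _)
      exact_mod_cast this
    have hk : (k:ℝ) ≤ ((M+k:ℕ):ℝ) := by push_cast; linarith
    have hα0 : (0:ℝ) ≤ ((M+k:ℕ):ℝ)^α := Real.rpow_nonneg (by positivity) _
    have hpow : ((M+k:ℕ):ℝ)^(α+1) = ((M+k:ℕ):ℝ)^α * ((M+k:ℕ):ℝ) :=
      Real.rpow_add_one (by positivity) α
    have hprod := mul_le_mul_of_nonneg_right hk hα0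
    rw [hpow]
    linarith [h, hprod]
  -- bound for all large real x
  set B : ℝ := Real.log (A+1) + (α+1)*Real.log 2 + C*(t*Real.log 2) with hB
  have hevB : ∀ x : ℝ, ((M:ℝ))^t ≤ x → 1 ≤ x →
      Real.log (f x) ≤ ((α+1)/t) * Real.log x + B := by
    intro x hxM hx1
    have hx0 : 0 < x := by linarith
    set m : ℕ := ⌊x^(1/t)⌋₊ with hm
    have h1t : (0:ℝ) < 1/t := by positivity
    have hxrt : (1:ℝ) ≤ x^(1/t) := Real.one_le_rpow hx1 (by positivity)
    have hMle : (M:ℝ) ≤ x^(1/t) := by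
      have h := Real.rpow_le_rpow (by positivity) hxM (le_of_lt h1t)
      rwa [← Real.rpow_mul (Nat.cast_nonneg M), mul_one_div, div_self ht.ne',
        Real.rpow_one] at h
    have hmM : M ≤ m := Nat.le_floor hMle
    have hm1 : 1 ≤ m := le_trans hM1 hmM
    have hm1' : (1:ℝ) ≤ (m:ℝ) := by exact_mod_cast hm1
    have hmle : ((m:ℕ):ℝ) ≤ x^(1/t) := Nat.floor_le (by positivity)
    have hltm : x^(1/t) < (m:ℝ) + 1 := Nat.lt_floor_add_one _
    have hxle : x ≤ ((m+1:ℕ):ℝ)^t := by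
      have h := Real.rpow_le_rpow (by positivity) hltm.le ht.le
      rw [← Real.rpow_mul hx0.le, one_div, inv_mul_cancel₀ ht.ne', Real.rpow_one] at h
      convert h using 2
      push_cast; ring
    have hxge : ((m:ℕ):ℝ)^t ≤ x := by
      have h := Real.rpow_le_rpow (by positivity) hmle ht.le
      rwa [← Real.rpow_mul hx0.le, one_div, inv_mul_cancel₀ ht.ne', Real.rpow_one] at h
    have hfm1 := hbound (m+1) (le_trans hmM (Nat.le_succ m))
    have hlip1 := lipKey hpos hdiff hlip hx1 hxle
    have hm0 : (0:ℝ) < (m:ℝ) := by linarith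
    have hm10 : (0:ℝ) < ((m+1:ℕ):ℝ) := by positivity
    have hdiffle : Real.log (((m+1:ℕ):ℝ)^t) - Real.log x ≤ t * Real.log 2 := by
      have e1 : Real.log (((m+1:ℕ):ℝ)^t) = t * Real.log ((m+1:ℕ):ℝ) :=
        Real.log_rpow hm10 t
      have e2 : Real.log (((m:ℕ):ℝ)^t) = t * Real.log ((m:ℕ):ℝ) :=
        Real.log_rpow hm0 t
      have e3 : Real.log (((m:ℕ):ℝ)^t) ≤ Real.log x := Real.log_le_log (by positivity) hxge
      have e4 : Real.log ((m+1:ℕ):ℝ) - Real.log ((m:ℕ):ℝ) ≤ Real.log 2 := by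
        rw [← Real.log_div (by positivity) (by positivity)]
        apply Real.log_le_log (by positivity)
        rw [div_le_iff₀ hm0]; push_cast; linarith
      have e5 := mul_le_mul_of_nonneg_left e4 ht.le
      linarith
    have h5 : Real.log (f x) ≤ Real.log (f (((m+1:ℕ):ℝ)^t)) + C*(t*Real.log 2) := by
      have h4 := (abs_le.1 hlip1).1
      have h6 := mul_le_mul_of_nonneg_left hdiffle hC
      linarith [h4, h6]
    have h6 : Real.log (f (((m+1:ℕ):ℝ)^t)) ≤
        Real.log (A+1) + (α+1) * Real.log ((m+1:ℕ):ℝ) := by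
      have h8 : (1:ℝ) ≤ ((m+1:ℕ):ℝ)^(α+1) :=
        Real.one_le_rpow (by exact_mod_cast Nat.one_le_iff_ne_zero.2 (Nat.succ_ne_zero m))
          (by positivity)
      have h7 : A + ((m+1:ℕ):ℝ)^(α+1) ≤ (A+1) * ((m+1:ℕ):ℝ)^(α+1) := by
        have hAP : A ≤ A * ((m+1:ℕ):ℝ)^(α+1) := le_mul_of_one_le_right hA0.le h8
        have : (A+1) * ((m+1:ℕ):ℝ)^(α+1) = A * ((m+1:ℕ):ℝ)^(α+1) + ((m+1:ℕ):ℝ)^(α+1) := by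
          ring
        linarith
      have hfpos : 0 < f (((m+1:ℕ):ℝ)^t) := hpos _ (Real.one_le_rpow (by exact_mod_cast Nat.one_le_iff_ne_zero.2 (Nat.succ_ne_zero m)) ht.le)
      calc Real.log (f (((m+1:ℕ):ℝ)^t)) ≤ Real.log ((A+1) * ((m+1:ℕ):ℝ)^(α+1)) :=
            Real.log_le_log hfpos (le_trans hfm1 h7)
        _ = Real.log (A+1) + (α+1)*Real.log ((m+1:ℕ):ℝ) := by
            rw [Real.log_mul (by positivity) (by positivity), Real.log_rpow hm10]
    have h9 : Real.log ((m+1:ℕ):ℝ) ≤ Real.log 2 + (1/t) * Real.log x := by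
      have hle2 : ((m+1:ℕ):ℝ) ≤ 2 * x^(1/t) := by push_cast; linarith
      calc Real.log ((m+1:ℕ):ℝ) ≤ Real.log (2 * x^(1/t)) :=
            Real.log_le_log hm10 hle2
        _ = Real.log 2 + (1/t)*Real.log x := by
            rw [Real.log_mul two_ne_zero (by positivity), Real.log_rpow hx0]
    have h10 := mul_le_mul_of_nonneg_left h9 (by positivity : (0:ℝ) ≤ α+1)
    have hexp : (α+1) * ((1/t) * Real.log x) = ((α+1)/t) * Real.log x := by ring
    rw [hB]
    linarith [h5, h6, h10]
  -- conclude via limsup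
  have hxbound : ∀ᶠ x : ℝ in atTop, Real.log (f x) / Real.log x ≤ 1/t + ε := by
    have hc : ∀ᶠ x : ℝ in atTop, max 1 (2*|B|/ε) ≤ Real.log x :=
      Real.tendsto_log_atTop.eventually_ge_atTop _
    filter_upwards [hc, eventually_ge_atTop (((M:ℝ))^t), eventually_ge_atTop (1:ℝ)]
      with x hcx hxM hx1
    have hlx : 0 < Real.log x := lt_of_lt_of_le one_pos (le_trans (le_max_left _ _) hcx)
    have key := hevB x hxM hx1
    have hBle : B ≤ (ε/2) * Real.log x := by
      have h1 : 2*|B|/ε ≤ Real.log x := le_trans (le_max_right _ _) hcx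
      have h2 : 2*|B| ≤ ε * Real.log x := by
        rw [div_le_iff₀ hε] at h1; linarith [h1]
      have := le_abs_self B
      linarith
    have hfrac : (α+1)/t = ε/2 + 1/t := by
      rw [hαdef]; field_simp
    rw [div_le_iff₀ hlx]
    rw [hfrac] at key
    linarith [key, hBle]
  have hcob : IsCoboundedUnder (· ≤ ·) atTop (fun x : ℝ => Real.log (f x)/Real.log x) := by
    refine isCoboundedUnder_le_of_eventually_le atTop (x := -(|Real.log (f 1)|+C)) ?_
    filter_upwards [ratioBound hpos hdiff hlip] with x hx
    exact (abs_le.1 hx).1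
  rw [hd]
  exact limsup_le_of_le hcob hxbound

end

end Stmt7Aux

theorem stmt7 (f : ℝ → ℝ) (C : ℝ)
    (hpos : ∀ x, 1 ≤ x → 0 < f x)
    (hdiff : ∀ x, 1 ≤ x → DifferentiableAt ℝ f x)
    (hlip : ∀ x : ℝ, 0 ≤ x → |deriv (fun t => Real.log (f (Real.exp t))) x| ≤ C)
    (d : ℝ) (hd : d = limsup (fun x : ℝ => Real.log (f x) / Real.log x) atTop) :
    (0 < d →
      {t : ℝ | 0 < t ∧ ∀ α : ℝ, 0 < α →
          Tendsto (fun n : ℕ => |f ((n : ℝ) ^ t) - f (((n : ℝ) - 1) ^ t)| / (n : ℝ) ^ α)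
            atTop (nhds 0)} = Set.Ioc 0 d⁻¹) ∧
    (d = 0 →
      {t : ℝ | 0 < t ∧ ∀ α : ℝ, 0 < α →
          Tendsto (fun n : ℕ => |f ((n : ℝ) ^ t) - f (((n : ℝ) - 1) ^ t)| / (n : ℝ) ^ α)
            atTop (nhds 0)} = Set.Ioi 0) := by
  constructor
  · intro hd0
    ext t
    simp only [Set.mem_setOf_eq, Set.mem_Ioc]
    constructor
    · rintro ⟨ht, hmem⟩
      refine ⟨ht, ?_⟩
      have hle := Stmt7Aux.d_le hpos hdiff hlip d hd ht hmem
      rw [← one_div]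
      rw [le_div_iff₀ hd0]
      have := mul_le_mul_of_nonneg_left hle ht.le
      rw [mul_one_div, div_self ht.ne'] at this
      linarith
    · rintro ⟨ht, htd⟩
      refine ⟨ht, fun α hα => ?_⟩
      have htd1 : t * d ≤ 1 := by
        rw [← one_div, le_div_iff₀ hd0] at htd
        linarith
      exact Stmt7Aux.mem_of hpos hdiff hlip d hd ht htd1 hα
  · intro hd0
    ext t
    simp only [Set.mem_setOf_eq, Set.mem_Ioi]
    constructor
    · rintro ⟨ht, _⟩; exact ht
    · intro ht
      refine ⟨ht, fun α hα => ?_⟩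
      exact Stmt7Aux.mem_of hpos hdiff hlip d hd ht (by rw [hd0]; simp) hα
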